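/- Let d be a hemimetric on X. Then the Smyth way-below-type distance Td defined by Td(x,y) = sup over all d-Cauchy nets (z_λ) with Smyth limit z of (limsup_λ d(x,z_λ) − d(y,z))₊ satisfies d ≤ Td, Td ≤ Td ∘ d, and Td ≤ d ∘ Td; in particular Td is a distance. -/

import Mathlib

open ENNReal NNReal Filter Set

/-- A net `z : ι → X` (over a preordered index) is `e`-Cauchy if
`lim_γ sup_{δ ≽ γ} e (z γ) (z δ) = 0`. -/
def CauchyNet {X : Type} (ι : Type) (instι : Preorder ι) (e : X → X → ℝ≥0∞)
    (z : ι → X) : Prop :=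
  letI := instι
  ∀ ε : ℝ≥0∞, 0 < ε → ∃ γ₀, ∀ γ, γ₀ ≤ γ → ∀ δ, γ ≤ δ → e (z γ) (z δ) ≤ ε

/-- `l` is a Smyth limit of the net `z` if `e y (z γ) → e y l` for every `y`. -/
def SmythLim {X : Type} (ι : Type) (instι : Preorder ι) (e : X → X → ℝ≥0∞)
    (z : ι → X) (l : X) : Prop :=
  letI := instι
  ∀ y : X, Filter.Tendsto (fun γ => e y (z γ)) Filter.atTop (nhds (e y l))

/-- The index preorder is a nonempty directed set. -/
def DirectedIdx (ι : Type) (instι : Preorder ι) : Prop :=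
  letI := instι
  Nonempty ι ∧ Directed (· ≤ ·) (id : ι → ι)

/-- The way-below distance `Td(x,y)`: the supremum over all `d`-Cauchy nets `(z_λ)`
with Smyth limit `l` of `(limsup_λ d x (z λ)) - d y l` (truncated subtraction). -/
noncomputable def Td {X : Type} (d : X → X → ℝ≥0∞) (x y : X) : ℝ≥0∞ :=
  sSup { v | ∃ (ι : Type) (instι : Preorder ι), DirectedIdx ι instι ∧
    ∃ (z : ι → X) (l : X), CauchyNet ι instι d z ∧ SmythLim ι instι d z l ∧
      v = (letI := instι; Filter.limsup (fun γ => d x (z γ)) Filter.atTop) - d y l }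

/-- For a hemimetric `d`, the Smyth way-below distance `Td` satisfies
`d ≤ Td`, `Td ≤ Td ∘ d` and `Td ≤ d ∘ Td`; in particular `Td` is a distance. -/
theorem Td_props {X : Type} (d : X → X → ℝ≥0∞)
    (href : ∀ x, d x x = 0) (htri : ∀ x y z, d x z ≤ d x y + d y z) :
    (∀ x y, d x y ≤ Td d x y) ∧
    (∀ x y w, Td d x y ≤ Td d x w + d w y) ∧
    (∀ x y w, Td d x y ≤ d x w + Td d w y) := by
  refine ⟨?_, ?_, ?_⟩
  · -- d ≤ Td, via the constant net at y indexed by ℕ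
    intro x y
    apply le_sSup
    refine ⟨ℕ, inferInstance, ⟨inferInstance, directed_id⟩, fun _ => y, y, ?_, ?_, ?_⟩
    · intro ε hε
      exact ⟨0, fun _ _ _ _ => by simp [href]⟩
    · intro y'
      exact tendsto_const_nhds
    · simp [href y, Filter.limsup_const]
  · -- Td ≤ Td ∘ d
    intro x y w
    apply sSup_le
    rintro v ⟨ι, instι, hdir, z, l, hc, hs, rfl⟩
    letI := instι
    have hmem : (Filter.limsup (fun γ => d x (z γ)) Filter.atTop) - d w l ≤ Td d x w :=
      le_sSup ⟨ι, instι, hdir, z, l, hc, hs, rfl⟩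
    refine le_trans ?_ (add_le_add_left hmem (d w y))
    rw [tsub_le_iff_right]
    calc Filter.limsup (fun γ => d x (z γ)) Filter.atTop
        ≤ (Filter.limsup (fun γ => d x (z γ)) Filter.atTop - d w l) + d w l :=
          le_tsub_add
      _ ≤ (Filter.limsup (fun γ => d x (z γ)) Filter.atTop - d w l) + (d w y + d y l) :=
          add_le_add_right (htri w y l) _
      _ = (Filter.limsup (fun γ => d x (z γ)) Filter.atTop - d w l + d w y) + d y l := by ring
  · -- Td ≤ d ∘ Td
    intro x y w
    apply sSup_le
    rintro v ⟨ι, instι, hdir, z, l, hc, hs, rfl⟩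
    letI := instι
    haveI : (Filter.atTop : Filter ι).NeBot :=
      Filter.atTop_neBot_iff.2 ⟨hdir.1, ⟨fun a b => hdir.2 a b⟩⟩
    have hmem : (Filter.limsup (fun γ => d w (z γ)) Filter.atTop) - d y l ≤ Td d w y :=
      le_sSup ⟨ι, instι, hdir, z, l, hc, hs, rfl⟩
    refine le_trans ?_ (add_le_add_right hmem (d x w))
    have hls : Filter.limsup (fun γ => d x (z γ)) Filter.atTop
        ≤ d x w + Filter.limsup (fun γ => d w (z γ)) Filter.atTop := by
      rw [← limsup_const_add Filter.atTop (fun γ => d w (z γ)) (d x w)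
        (isBoundedUnder_of ⟨⊤, fun _ => le_top⟩)
        Filter.isCobounded_le_of_bot]
      exact Filter.limsup_le_limsup (Filter.Eventually.of_forall fun γ => htri x w (z γ))
    calc Filter.limsup (fun γ => d x (z γ)) Filter.atTop - d y l
        ≤ (d x w + Filter.limsup (fun γ => d w (z γ)) Filter.atTop) - d y l :=
          tsub_le_tsub_right hls _
      _ ≤ d x w + (Filter.limsup (fun γ => d w (z γ)) Filter.atTop - d y l) :=
          add_tsub_le_assoc
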